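/- For every integer n ≥ 1, the uniform average over all sign vectors ε ∈ {−1,+1}ⁿ satisfies 2^{−n} · Σ_{ε ∈ {−1,+1}ⁿ} |Σ_{i=1}^n ε_i| ≥ √n / √2. -/

import Mathlib

open Finset

/-- Central binomial lower bound: `16^m ≤ 4m·C(2m,m)²` for `m ≥ 1`. -/
lemma cb_lower (m : ℕ) (hm : 1 ≤ m) : 16 ^ m ≤ 4 * m * (Nat.centralBinom m) ^ 2 := by
  induction m with
  | zero => omega
  | succ k ih =>
    rcases Nat.lt_or_ge k 1 with hk | hk
    · interval_cases k
      simp [Nat.centralBinom]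
    · have ih := ih hk
      have key : (k + 1) * Nat.centralBinom (k + 1) = 2 * (2 * k + 1) * Nat.centralBinom k :=
        Nat.succ_mul_centralBinom_succ k
      have hpos : 0 < (k + 1) ^ 2 := by positivity
      refine Nat.le_of_mul_le_mul_left ?_ hpos
      have expand : (k + 1) ^ 2 * (4 * (k + 1) * Nat.centralBinom (k + 1) ^ 2)
          = 4 * (k + 1) * (2 * (2 * k + 1) * Nat.centralBinom k) ^ 2 := by
        rw [← key]; ring
      calc (k + 1) ^ 2 * 16 ^ (k + 1)
          = 16 * (k + 1) ^ 2 * 16 ^ k := by rw [pow_succ]; ring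
        _ ≤ 16 * (k + 1) ^ 2 * (4 * k * Nat.centralBinom k ^ 2) :=
            Nat.mul_le_mul_left _ ih
        _ ≤ (k + 1) ^ 2 * (4 * (k + 1) * Nat.centralBinom (k + 1) ^ 2) := by
            rw [expand]; nlinarith [sq_nonneg (Nat.centralBinom k)]

/-- `4^n ≤ 8n·C(n−1, ⌊n/2⌋)²` for `n ≥ 1`. -/
lemma choose_lower (n : ℕ) (hn : 1 ≤ n) :
    4 ^ n ≤ 8 * n * ((n - 1).choose (n / 2)) ^ 2 := by
  rcases Nat.even_or_odd n with ⟨m, hm⟩ | ⟨m, hm⟩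
  · -- n = 2m, m ≥ 1
    obtain ⟨j, rfl⟩ : ∃ j, m = j + 1 := ⟨m - 1, by omega⟩
    subst hm
    have h1 : (j + 1) + (j + 1) - 1 = 2 * j + 1 := by omega
    have hhalf : ((j + 1) + (j + 1)) / 2 = j + 1 := by omega
    have hsymm : (2 * j + 1).choose j = (2 * j + 1).choose (j + 1) := by
      have := Nat.choose_symm (show j + 1 ≤ 2 * j + 1 by omega)
      have hs : 2 * j + 1 - (j + 1) = j := by omega
      rwa [hs] at this
    have hcb : Nat.centralBinom (j + 1) = 2 * (2 * j + 1).choose (j + 1) := by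
      have h2 : 2 * (j + 1) = (2 * j + 1) + 1 := by ring
      rw [Nat.centralBinom, h2, Nat.choose_succ_succ (2 * j + 1) j, hsymm]
      ring
    have := cb_lower (j + 1) (by omega)
    rw [hcb] at this
    have h4 : 4 ^ ((j + 1) + (j + 1)) = 16 ^ (j + 1) := by
      rw [← two_mul, pow_mul]; norm_num
    rw [h4, h1, hhalf]
    calc 16 ^ (j + 1) ≤ 4 * (j + 1) * (2 * (2 * j + 1).choose (j + 1)) ^ 2 := this
      _ = 8 * ((j + 1) + (j + 1)) * ((2 * j + 1).choose (j + 1)) ^ 2 := by ring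
  · -- n = 2m + 1
    subst hm
    have h1 : 2 * m + 1 - 1 = 2 * m := by omega
    have hhalf : (2 * m + 1) / 2 = m := by omega
    rw [h1, hhalf]
    rcases Nat.eq_zero_or_pos m with rfl | hm1
    · norm_num
    · have := cb_lower m hm1
      have h4 : 4 ^ (2 * m + 1) = 4 * 16 ^ m := by
        rw [pow_succ, pow_mul, mul_comm]; norm_num
      rw [h4]
      calc 4 * 16 ^ m ≤ 4 * (4 * m * Nat.centralBinom m ^ 2) := by
            exact Nat.mul_le_mul_left 4 this
        _ ≤ 8 * (2 * m + 1) * (Nat.centralBinom m) ^ 2 := by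
            rw [Nat.centralBinom]; nlinarith [sq_nonneg ((2*m).choose m)]

/-- Telescoping: `∑_{k≤K} C(n,k)(n−2k) = n·C(n−1,K)` for `K ≤ n−1`. -/
lemma telescope (n : ℕ) (hn : 1 ≤ n) : ∀ K, K ≤ n - 1 →
    ∑ k ∈ range (K + 1), (n.choose k : ℝ) * ((n : ℝ) - 2 * k) = n * ((n - 1).choose K) := by
  intro K
  induction K with
  | zero => intro _; simp
  | succ K ih =>
    intro hK
    have hK' : K ≤ n - 1 := by omega
    rw [Finset.sum_range_succ, ih hK']
    -- identities
    have idA : n * (n - 1).choose K = n.choose (K + 1) * (K + 1) := by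
      have := Nat.add_one_mul_choose_eq (n - 1) K
      have h : n - 1 + 1 = n := by omega
      rwa [h] at this
    have idB : (n - 1).choose (K + 1) * n = n.choose (K + 1) * (n - (K + 1)) := by
      have := Nat.choose_mul_succ_eq (n - 1) (K + 1)
      have h : n - 1 + 1 = n := by omega
      rwa [h] at this
    have hA : (n : ℝ) * ((n - 1).choose K) = (n.choose (K + 1) : ℝ) * (K + 1) := by
      exact_mod_cast congrArg (Nat.cast : ℕ → ℝ) idA
    have hB : ((n - 1).choose (K + 1) : ℝ) * n = (n.choose (K + 1) : ℝ) * ((n : ℝ) - (K + 1)) := by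
      have := congrArg (Nat.cast : ℕ → ℝ) idB
      push_cast [Nat.cast_sub (show K + 1 ≤ n by omega)] at this
      exact_mod_cast this
    have hnpos : (0 : ℝ) < n := by exact_mod_cast hn
    push_cast
    linear_combination hA - hB

/-- Reindex the sum over sign vectors as a sum over subset sizes. -/
lemma sum_eq (n : ℕ) :
    ∑ ε ∈ Fintype.piFinset (fun _ : Fin n => ({-1, 1} : Finset ℝ)), |∑ i, ε i|
      = ∑ k ∈ range (n + 1), (n.choose k : ℝ) * |2 * (k : ℝ) - n| := by
  have step1 : ∑ ε ∈ Fintype.piFinset (fun _ : Fin n => ({-1, 1} : Finset ℝ)), |∑ i, ε i|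
      = ∑ A ∈ (univ : Finset (Fin n)).powerset, |2 * (A.card : ℝ) - n| := by
    refine Finset.sum_nbij' (fun ε => univ.filter (fun i => ε i = 1))
      (fun A => fun i => if i ∈ A then (1 : ℝ) else -1) ?_ ?_ ?_ ?_ ?_
    · intro ε _; exact Finset.mem_powerset.2 (Finset.filter_subset _ _)
    · intro A _
      rw [Fintype.mem_piFinset]
      intro i
      by_cases h : i ∈ A <;> simp [h] <;> norm_num
    · intro ε hε
      rw [Fintype.mem_piFinset] at hε
      funext i
      have hi := hε i
      simp only [Finset.mem_insert, Finset.mem_singleton] at hi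
      by_cases h : ε i = 1 <;> simp [h]
      · rcases hi with h' | h'
        · exact h'.symm
        · exact absurd h' h
    · intro A _
      ext i
      simp only [Finset.mem_filter, Finset.mem_univ, true_and]
      by_cases h : i ∈ A <;> simp [h] <;> norm_num
    · intro ε hε
      rw [Fintype.mem_piFinset] at hε
      have hval : ∑ i, ε i = 2 * ((univ.filter (fun i => ε i = 1)).card : ℝ) - n := by
        have h1 : ∀ i, ε i = 2 * (if ε i = 1 then (1 : ℝ) else 0) - 1 := by
          intro i
          have hi := hε i
          simp only [Finset.mem_insert, Finset.mem_singleton] at hi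
          rcases hi with h | h <;> rw [h] <;> norm_num
        rw [Finset.sum_congr rfl (fun i _ => h1 i), Finset.sum_sub_distrib,
          ← Finset.mul_sum, Finset.sum_boole, Finset.sum_const, Finset.card_univ,
          Fintype.card_fin]
        simp
      rw [hval]
  rw [step1, Finset.sum_powerset, Finset.card_univ, Fintype.card_fin]
  refine Finset.sum_congr rfl fun k hk => ?_
  have hall : ∀ A ∈ Finset.powersetCard k (univ : Finset (Fin n)),
      |2 * (A.card : ℝ) - n| = |2 * (k : ℝ) - n| := by
    intro A hA
    rw [(Finset.mem_powersetCard.1 hA).2]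
  rw [Finset.sum_congr rfl hall, Finset.sum_const, Finset.card_powersetCard,
    Finset.card_univ, Fintype.card_fin, nsmul_eq_mul]

/-- Closed form for the binomial sum with absolute values. -/
lemma sum_abs_eq (n : ℕ) (hn : 1 ≤ n) :
    ∑ k ∈ range (n + 1), (n.choose k : ℝ) * |2 * (k : ℝ) - n|
      = 2 * (n : ℝ) * (((n - 1).choose (n / 2) : ℕ) : ℝ) := by
  set h := n / 2 with hh
  have hsplit : (∑ k ∈ Finset.Ico 0 (h + 1), (n.choose k : ℝ) * |2 * (k : ℝ) - n|)
      + ∑ k ∈ Finset.Ico (h + 1) (n + 1), (n.choose k : ℝ) * |2 * (k : ℝ) - n|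
      = ∑ k ∈ Finset.Ico 0 (n + 1), (n.choose k : ℝ) * |2 * (k : ℝ) - n| :=
    Finset.sum_Ico_consecutive _ (by omega) (by omega)
  rw [Finset.range_eq_Ico, ← hsplit]
  have first : ∑ k ∈ Finset.Ico 0 (h + 1), (n.choose k : ℝ) * |2 * (k : ℝ) - n|
      = (n : ℝ) * (((n - 1).choose h : ℕ) : ℝ) := by
    rw [← Finset.range_eq_Ico]
    rw [Finset.sum_congr rfl (fun k hk => ?_)]
    · exact telescope n hn h (by omega)
    · rw [Finset.mem_range] at hk
      have h2k : 2 * k ≤ n := by omega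
      have habs : |2 * (k : ℝ) - n| = (n : ℝ) - 2 * k := by
        rw [abs_of_nonpos (sub_nonpos.2 (by exact_mod_cast h2k)), neg_sub]
      rw [habs]
  have second : ∑ k ∈ Finset.Ico (h + 1) (n + 1), (n.choose k : ℝ) * |2 * (k : ℝ) - n|
      = (n : ℝ) * (((n - 1).choose h : ℕ) : ℝ) := by
    have hb : ∑ k ∈ Finset.Ico (h + 1) (n + 1), (n.choose k : ℝ) * |2 * (k : ℝ) - n|
        = ∑ j ∈ range (n - h), (n.choose j : ℝ) * ((n : ℝ) - 2 * j) := by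
      refine Finset.sum_nbij' (fun k => n - k) (fun j => n - j) ?_ ?_ ?_ ?_ ?_
      · intro k hk; simp only [Finset.mem_Ico] at hk; simp only [Finset.mem_range]; omega
      · intro j hj; simp only [Finset.mem_range] at hj; simp only [Finset.mem_Ico]; omega
      · intro k hk; simp only [Finset.mem_Ico] at hk; omega
      · intro j hj; simp only [Finset.mem_range] at hj; omega
      · intro k hk
        simp only [Finset.mem_Ico] at hk
        have hkn : k ≤ n := by omega
        have hc : n.choose (n - k) = n.choose k := Nat.choose_symm hkn
        have hcast : ((n - k : ℕ) : ℝ) = (n : ℝ) - k := by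
          push_cast [Nat.cast_sub hkn]; ring
        have habs : |2 * (k : ℝ) - n| = 2 * (k : ℝ) - n := by
          refine abs_of_nonneg ?_
          have h2k : n ≤ 2 * k := by omega
          have : (n : ℝ) ≤ 2 * k := by exact_mod_cast h2k
          linarith
        rw [hc, habs, hcast]
        ring
    rw [hb]
    have hr : n - h = (n - h - 1) + 1 := by omega
    rw [hr, telescope n hn (n - h - 1) (by omega)]
    have hcs : (n - 1).choose (n - h - 1) = (n - 1).choose h := by
      have := Nat.choose_symm (show h ≤ n - 1 by omega)
      have he : n - 1 - h = n - h - 1 := by omega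
      rwa [he] at this
    rw [hcs]
  rw [first, second]
  ring

/-- **Lower Khintchine inequality for Rademacher sums with unit coefficients.**
Averaging over all sign vectors `ε ∈ {-1,+1}ⁿ`,
`2⁻ⁿ · Σ_ε |Σ_i ε_i| ≥ √n / √2`. -/
theorem khintchine_lower_bound (n : ℕ) (hn : 1 ≤ n) :
    Real.sqrt n / Real.sqrt 2 ≤
      ((2 : ℝ) ^ n)⁻¹ *
        ∑ ε ∈ Fintype.piFinset (fun _ : Fin n => ({-1, 1} : Finset ℝ)),
          |∑ i, ε i| := by
  rw [sum_eq n, sum_abs_eq n hn]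
  have hchoose : 0 < (n - 1).choose (n / 2) := Nat.choose_pos (by omega)
  set C : ℝ := (((n - 1).choose (n / 2) : ℕ) : ℝ) with hCdef
  have hC0 : (0 : ℝ) < C := by rw [hCdef]; exact_mod_cast hchoose
  have hn0 : (0 : ℝ) < n := by exact_mod_cast hn
  have hCr : (4 : ℝ) ^ n ≤ 8 * n * C ^ 2 := by
    rw [hCdef]; exact_mod_cast choose_lower n hn
  have h4n : (0 : ℝ) < 4 ^ n := by positivity
  have hX : (0 : ℝ) ≤ ((2 : ℝ) ^ n)⁻¹ * (2 * (n : ℝ) * C) := by positivity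
  have h22 : ((2 : ℝ) ^ n) ^ 2 = 4 ^ n := by
    rw [← pow_mul, mul_comm, pow_mul]; norm_num
  have hsq : (((2 : ℝ) ^ n)⁻¹ * (2 * (n : ℝ) * C)) ^ 2 = 4 * (n : ℝ) ^ 2 * C ^ 2 / 4 ^ n := by
    have h2n : ((2 : ℝ) ^ n) ≠ 0 := by positivity
    field_simp
    rw [← h22]
    ring
  have h2 : (n : ℝ) / 2 ≤ (((2 : ℝ) ^ n)⁻¹ * (2 * (n : ℝ) * C)) ^ 2 := by
    rw [hsq, div_le_div_iff₀ (by norm_num) h4n]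
    have := mul_le_mul_of_nonneg_left hCr hn0.le
    nlinarith [this]
  calc Real.sqrt n / Real.sqrt 2 = Real.sqrt ((n : ℝ) / 2) :=
        (Real.sqrt_div (by positivity) 2).symm
    _ ≤ Real.sqrt ((((2 : ℝ) ^ n)⁻¹ * (2 * (n : ℝ) * C)) ^ 2) := Real.sqrt_le_sqrt h2
    _ = ((2 : ℝ) ^ n)⁻¹ * (2 * (n : ℝ) * C) := Real.sqrt_sq hX
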